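/- Let c* ∈ ℝ^m and let (c^k) be a sequence in ℝ^m with c^k → c* as k → ∞. Let (x^k) be a sequence in H with x^k ∈ S(c^k) for all k, and suppose that x^k converges weakly to some x* ∈ H. Then x* ∈ S(c*). -/

import Mathlib

open Filter Topology
open scoped NNReal InnerProductSpace

/-- Gradient inequality for convex differentiable functions on a real Hilbert space. -/
lemma grad_ineq
    {H : Type*} [NormedAddCommGroup H] [InnerProductSpace ℝ H] [CompleteSpace H]
    {f : H → ℝ} (hconv : ConvexOn ℝ Set.univ f) (hdiff : Differentiable ℝ f)
    (a b : H) : f a + ⟪gradient f a, b - a⟫_ℝ ≤ f b := by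
  set g : ℝ → ℝ := fun t => f (t • (b - a) + a) with hg
  have hgconv : ConvexOn ℝ Set.univ g := by
    have := hconv.comp_affineMap (AffineMap.lineMap a b : ℝ →ᵃ[ℝ] H)
    simp only [Set.preimage_univ] at this
    rw [show g = f ∘ (AffineMap.lineMap a b : ℝ →ᵃ[ℝ] H) from by
      funext t; simp [hg, AffineMap.lineMap_apply]]
    exact this
  have hcurve : HasDerivAt (fun t : ℝ => t • (b - a) + a) (b - a) 0 := by
    simpa using (hasDerivAt_id (0:ℝ)).smul_const (b - a) |>.add_const a
  have hgrad : HasGradientAt f (gradient f a) a := (hdiff a).hasGradientAt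
  have hfd : HasFDerivAt f (InnerProductSpace.toDual ℝ H (gradient f a)) a := by
    rwa [hasGradientAt_iff_hasFDerivAt] at hgrad
  have hfd0 : HasFDerivAt f (InnerProductSpace.toDual ℝ H (gradient f a))
      ((fun t : ℝ => t • (b - a) + a) 0) := by simpa using hfd
  have hgd : HasDerivAt g (⟪gradient f a, b - a⟫_ℝ) 0 := by
    have := hfd0.comp_hasDerivAt 0 hcurve
    simpa [InnerProductSpace.toDual_apply_apply, hg, Function.comp_def] using this
  have hslope := hgconv.le_slope_of_hasDerivAt (Set.mem_univ (0:ℝ)) (Set.mem_univ (1:ℝ))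
    one_pos hgd
  have hs : slope g 0 1 = f b - f a := by
    simp [slope_def_field, hg]
  rw [hs] at hslope
  linarith

/-- If `c^k → c*`, `x^k ∈ S(c^k)` for all `k`, and `x^k` converges weakly to
`x*`, then `x* ∈ S(c*)`, where `S(c)` is the set of minimizers of `z ↦ max_i (f_i(z) − c_i)`. -/
theorem stmt_2
    {H : Type*} [NormedAddCommGroup H] [InnerProductSpace ℝ H] [CompleteSpace H]
    {m : ℕ} (hm : 0 < m) (f : Fin m → H → ℝ)
    (hconv : ∀ i, ConvexOn ℝ Set.univ (f i))
    (hdiff : ∀ i, Differentiable ℝ (f i))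
    (hlip : ∀ i, ∃ L : ℝ≥0, LipschitzWith L (gradient (f i)))
    (c : ℕ → Fin m → ℝ) (cstar : Fin m → ℝ)
    (hc : Tendsto c atTop (𝓝 cstar))
    (x : ℕ → H) (xstar : H)
    (hx : ∀ k : ℕ, ∀ y : H, (⨆ i, (f i (x k) - c k i)) ≤ ⨆ i, (f i y - c k i))
    (hweak : ∀ y : H, Tendsto (fun k => ⟪x k, y⟫_ℝ) atTop (𝓝 ⟪xstar, y⟫_ℝ)) :
    ∀ y : H, (⨆ i, (f i xstar - cstar i)) ≤ ⨆ i, (f i y - cstar i) := by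
  intro y
  haveI : Nonempty (Fin m) := ⟨⟨0, hm⟩⟩
  obtain ⟨i, hi⟩ := exists_eq_ciSup_of_finite (f := fun j => f j xstar - cstar j)
  rw [← hi]
  set g := gradient (f i) xstar with hgdef
  -- componentwise convergence of c
  have hci : ∀ j, Tendsto (fun k => c k j) atTop (𝓝 (cstar j)) := by
    intro j
    exact (continuous_apply j).continuousAt.tendsto.comp hc
  -- lower bound for each k
  have key : ∀ k, f i xstar + (⟪x k, g⟫_ℝ - ⟪xstar, g⟫_ℝ) - c k i
      ≤ ⨆ j, (f j y - c k j) := by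
    intro k
    have h1 : f i xstar + ⟪g, x k - xstar⟫_ℝ ≤ f i (x k) :=
      grad_ineq (hconv i) (hdiff i) xstar (x k)
    have h2 : f i (x k) - c k i ≤ ⨆ j, (f j (x k) - c k j) :=
      le_ciSup (f := fun j => f j (x k) - c k j) (Set.Finite.bddAbove (Set.finite_range _)) i
    have h3 := hx k y
    have hinner : ⟪g, x k - xstar⟫_ℝ = ⟪x k, g⟫_ℝ - ⟪xstar, g⟫_ℝ := by
      rw [inner_sub_right, real_inner_comm g (x k), real_inner_comm g xstar]
    rw [hinner] at h1
    linarith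
  -- limits of both sides
  have hL : Tendsto (fun k => f i xstar + (⟪x k, g⟫_ℝ - ⟪xstar, g⟫_ℝ) - c k i)
      atTop (𝓝 (f i xstar - cstar i)) := by
    have h1 := (hweak g).sub_const (⟪xstar, g⟫_ℝ)
    have h2 := (tendsto_const_nhds (x := f i xstar) (f := atTop (α := ℕ))).add h1
    have h3 := h2.sub (hci i)
    simpa using h3
  have hR : Tendsto (fun k => ⨆ j, (f j y - c k j)) atTop
      (𝓝 (⨆ j, (f j y - cstar j))) := by
    have hne : (Finset.univ : Finset (Fin m)).Nonempty := Finset.univ_nonempty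
    have := Tendsto.finset_sup'_nhds_apply (f := fun j k => f j y - c k j)
      (g := fun j => f j y - cstar j) hne
      (fun j _ => (tendsto_const_nhds (x := f j y)).sub (hci j))
    rw [Finset.sup'_univ_eq_ciSup] at this
    convert this using 2 with k
    exact (Finset.sup'_univ_eq_ciSup _).symm
  exact le_of_tendsto_of_tendsto' hL hR key
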